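/- In the setting of the primal-dual forward-backward-forward algorithm — H, G real Hilbert spaces; A : H → 2^H and B : G → 2^G maximally monotone; L : H → G nonzero bounded linear; z ∈ H, r ∈ G with z in the range of x ↦ Ax + L*(B(Lx − r)); absolutely summable error sequences (a_{1,n}), (b_{1,n}), (c_{1,n}) in H and (a_{2,n}), (b_{2,n}), (c_{2,n}) in G; x_0 ∈ H, v_0 ∈ G, ε ∈ (0, 1/(‖L‖+1)), γ_n ∈ [ε, (1−ε)/‖L‖]; iteration y_{1,n} = x_n − γ_n(L*v_n + a_{1,n}), y_{2,n} = v_n + γ_n(L x_n + a_{2,n}), p_{1,n} = J_{γ_n A}(y_{1,n} + γ_n z) + b_{1,n}, p_{2,n} = J_{γ_n B^{-1}}(y_{2,n} − γ_n r) + b_{2,n}, q_{1,n} = p_{1,n} − γ_n(L*p_{2,n} + c_{1,n}), q_{2,n} = p_{2,n} + γ_n(L p_{1,n} + c_{2,n}), x_{n+1} = x_n − y_{1,n} + q_{1,n}, v_{n+1} = v_n − y_{2,n} + q_{2,n} — let x̄ be the weak limit of (x_n) (a primal solution) and v̄ the weak limit of (v_n) (a dual solution) with z − L*v̄ ∈ Ax̄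 and v̄ ∈ B(Lx̄ − r). If A is uniformly monotone at x̄, then x_n → x̄ and p_{1,n} → x̄ in norm. -/

import Mathlib

open scoped InnerProductSpace
open Filter Topology

/-- Monotonicity of a set-valued operator on a real inner product space. -/
def MonotoneSV {H : Type*} [NormedAddCommGroup H] [InnerProductSpace ℝ H]
    (A : H → Set H) : Prop :=
  ∀ x y u v : H, u ∈ A x → v ∈ A y → 0 ≤ ⟪x - y, u - v⟫_ℝ

/-- Maximal monotonicity of a set-valued operator on a real inner product space. -/
def MaxMonotone {H : Type*} [NormedAddCommGroup H] [InnerProductSpace ℝ H]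
    (A : H → Set H) : Prop :=
  MonotoneSV A ∧ ∀ x u : H, (∀ y v : H, v ∈ A y → (0:ℝ) ≤ ⟪x - y, u - v⟫_ℝ) → u ∈ A x

/-- `J` is the resolvent `(Id + γ A)⁻¹` of `γ A`. -/
def IsResolvent {E : Type*} [AddCommGroup E] [Module ℝ E]
    (γ : ℝ) (A : E → Set E) (J : E → E) : Prop :=
  ∀ w, ∃ u ∈ A (J w), w = J w + γ • u

/-- Weak convergence of a sequence in an inner product space. -/
def WeakTendsto {H : Type*} [NormedAddCommGroup H] [InnerProductSpace ℝ H]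
    (x : ℕ → H) (l : H) : Prop :=
  ∀ w : H, Filter.Tendsto (fun n => ⟪x n, w⟫_ℝ) Filter.atTop (nhds ⟪l, w⟫_ℝ)

/-- `M` is uniformly monotone at `x`: there is an increasing function `φ` on `[0,∞)`
vanishing only at `0` such that `⟪x - y, u - v⟫ ≥ φ (‖x - y‖)` for every `u ∈ M x` and
every `(y, v)` in the graph of `M`. -/
def UnifMonoAt {H : Type*} [NormedAddCommGroup H] [InnerProductSpace ℝ H]
    (M : H → Set H) (x : H) : Prop :=
  ∃ φ : ℝ → ℝ, (∀ s t : ℝ, 0 ≤ s → s ≤ t → φ s ≤ φ t) ∧ φ 0 = 0 ∧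
    (∀ t : ℝ, 0 < t → 0 < φ t) ∧
    ∀ u ∈ M x, ∀ y v, v ∈ M y → φ ‖x - y‖ ≤ ⟪x - y, u - v⟫_ℝ

set_option linter.unusedSectionVars false
set_option linter.deprecated false
set_option linter.unusedVariables false

namespace Stmt14Aux

variable {H G : Type*} [NormedAddCommGroup H] [InnerProductSpace ℝ H]
  [NormedAddCommGroup G] [InnerProductSpace ℝ G]

noncomputable def mk (h : H) (g : G) : WithLp 2 (H × G) := (WithLp.equiv 2 (H × G)).symm (h, g)

lemma mk_eq {h h' : H} {g g' : G} (e1 : h = h') (e2 : g = g') : mk h g = mk h' g' := by rw [e1, e2]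

lemma mk_sub (h h' : H) (g g' : G) : mk h g - mk h' g' = mk (h - h') (g - g') := rfl
lemma mk_add (h h' : H) (g g' : G) : mk h g + mk h' g' = mk (h + h') (g + g') := rfl
lemma mk_smul (c : ℝ) (h : H) (g : G) : c • mk h g = mk (c • h) (c • g) := rfl
lemma mk_neg (h : H) (g : G) : -mk h g = mk (-h) (-g) := rfl

lemma inner_mk (h h' : H) (g g' : G) : ⟪mk h g, mk h' g'⟫_ℝ = ⟪h, h'⟫_ℝ + ⟪g, g'⟫_ℝ :=
  WithLp.prod_inner_apply _ _

lemma norm_mk_sq (h : H) (g : G) : ‖mk h g‖ ^ 2 = ‖h‖ ^ 2 + ‖g‖ ^ 2 :=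
  WithLp.prod_norm_sq_eq_of_L2 _

lemma norm_mk_le (h : H) (g : G) : ‖mk h g‖ ≤ ‖h‖ + ‖g‖ := by
  apply le_of_pow_le_pow_left₀ two_ne_zero (by positivity)
  rw [norm_mk_sq]; nlinarith [norm_nonneg h, norm_nonneg g]

lemma fst_norm_le (h : H) (g : G) : ‖h‖ ≤ ‖mk h g‖ := by
  apply le_of_pow_le_pow_left₀ two_ne_zero (norm_nonneg _)
  rw [norm_mk_sq]; nlinarith [norm_nonneg g]

variable [CompleteSpace H] [CompleteSpace G]

noncomputable def Sk (L : H →L[ℝ] G) (w : WithLp 2 (H × G)) : WithLp 2 (H × G) :=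
  mk (ContinuousLinearMap.adjoint L w.snd) (-(L w.fst))

lemma Sk_mk (L : H →L[ℝ] G) (h : H) (g : G) :
    Sk L (mk h g) = mk (ContinuousLinearMap.adjoint L g) (-(L h)) := rfl

lemma Sk_sub (L : H →L[ℝ] G) (u v : WithLp 2 (H × G)) : Sk L (u - v) = Sk L u - Sk L v := by
  rw [Sk, Sk, Sk, mk_sub]
  exact mk_eq (map_sub _ _ _) (by rw [show (u - v).fst = u.fst - v.fst from rfl, map_sub]; abel)

lemma inner_Sk_self (L : H →L[ℝ] G) (w : WithLp 2 (H × G)) : ⟪w, Sk L w⟫_ℝ = 0 := by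
  have hw : w = mk w.fst w.snd := rfl
  rw [hw, Sk_mk, inner_mk, inner_neg_right, real_inner_comm, ContinuousLinearMap.adjoint_inner_left]
  ring

lemma norm_adj (L : H →L[ℝ] G) : ‖ContinuousLinearMap.adjoint L‖ = ‖L‖ :=
  ContinuousLinearMap.adjoint.norm_map L

lemma norm_Sk_le (L : H →L[ℝ] G) (w : WithLp 2 (H × G)) : ‖Sk L w‖ ≤ ‖L‖ * ‖w‖ := by
  apply le_of_pow_le_pow_left₀ two_ne_zero (by positivity)
  rw [show Sk L w = mk (ContinuousLinearMap.adjoint L w.snd) (-(L w.fst)) from rfl, norm_mk_sq]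
  have h1 : ‖ContinuousLinearMap.adjoint L w.snd‖ ≤ ‖L‖ * ‖w.snd‖ := by
    simpa [norm_adj] using (ContinuousLinearMap.adjoint L).le_opNorm w.snd
  have h2 : ‖L w.fst‖ ≤ ‖L‖ * ‖w.fst‖ := L.le_opNorm _
  have h3 : ‖w‖ ^ 2 = ‖w.fst‖ ^ 2 + ‖w.snd‖ ^ 2 := norm_mk_sq w.fst w.snd
  rw [norm_neg, mul_pow]
  nlinarith [norm_nonneg w.fst, norm_nonneg w.snd, norm_nonneg (L w.fst),
    norm_nonneg (ContinuousLinearMap.adjoint L w.snd), norm_nonneg L]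

lemma three_point {E : Type*} [NormedAddCommGroup E] [InnerProductSpace ℝ E] (p w b : E) :
    ‖p - b‖ ^ 2 = ‖w - b‖ ^ 2 - ‖p - w‖ ^ 2 + 2 * ⟪p - b, p - w⟫_ℝ := by
  simp only [@norm_sub_sq_real, inner_sub_left, inner_sub_right]
  linarith [real_inner_comm p b, real_inner_comm p w, real_inner_comm b w,
    real_inner_self_eq_norm_sq p, real_inner_self_eq_norm_sq w, real_inner_self_eq_norm_sq b]

lemma tseng_core {E : Type*} [NormedAddCommGroup E] [InnerProductSpace ℝ E]
    (γ : ℝ) (w wb P U a Sw SP SwP ub : E)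
    (h1 : P - w = (-γ) • (U + Sw + a))
    (h2 : SwP = Sw - SP)
    (h3 : ⟪P - wb, SP + ub⟫_ℝ = 0) :
    ‖P + γ • SwP - wb‖ ^ 2
      = ‖w - wb‖ ^ 2 - ‖P - w‖ ^ 2 + γ ^ 2 * ‖SwP‖ ^ 2
        - 2 * γ * ⟪P - wb, U - ub⟫_ℝ - 2 * γ * ⟪P - wb, a⟫_ℝ := by
  have key : P + γ • SwP - wb = (P - wb) + γ • SwP := by abel
  have e : ‖(P - wb) + γ • SwP‖ ^ 2
      = ‖P - wb‖ ^ 2 + 2 * ⟪P - wb, γ • SwP⟫_ℝ + ‖γ • SwP‖ ^ 2 := norm_add_sq_real _ _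
  have e2 : ‖γ • SwP‖ ^ 2 = γ ^ 2 * ‖SwP‖ ^ 2 := by
    rw [norm_smul]; simp [mul_pow, sq_abs]
  have e3 := three_point P w wb
  have i1 : ⟪P - wb, P - w⟫_ℝ = -γ * (⟪P - wb, U⟫_ℝ + ⟪P - wb, Sw⟫_ℝ + ⟪P - wb, a⟫_ℝ) := by
    rw [h1, real_inner_smul_right, inner_add_right, inner_add_right]
  have i2 : ⟪P - wb, γ • SwP⟫_ℝ = γ * (⟪P - wb, Sw⟫_ℝ - ⟪P - wb, SP⟫_ℝ) := by
    rw [h2, real_inner_smul_right, inner_sub_right]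
  have i3 : ⟪P - wb, U - ub⟫_ℝ = ⟪P - wb, U⟫_ℝ - ⟪P - wb, ub⟫_ℝ := inner_sub_right _ _ _
  have i4 : ⟪P - wb, SP⟫_ℝ + ⟪P - wb, ub⟫_ℝ = 0 := by
    rw [← inner_add_right]; exact h3
  rw [key, e, e2, e3, i1, i2, i3]
  linear_combination (-2 * γ) * i4

end Stmt14Aux

open Stmt14Aux

set_option maxHeartbeats 1600000 in
theorem stmt_14 {H G : Type*} [NormedAddCommGroup H] [InnerProductSpace ℝ H] [CompleteSpace H]
    [NormedAddCommGroup G] [InnerProductSpace ℝ G] [CompleteSpace G]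
    (A : H → Set H) (hA : MaxMonotone A)
    (B : G → Set G) (hB : MaxMonotone B)
    (L : H →L[ℝ] G) (hL : L ≠ 0) (z : H) (r : G)
    (hran : ∃ x : H, ∃ u ∈ A x, ∃ w ∈ B (L x - r),
      z = u + ContinuousLinearMap.adjoint L w)
    (a₁ b₁ c₁ : ℕ → H) (a₂ b₂ c₂ : ℕ → G)
    (ha₁ : Summable fun n => ‖a₁ n‖) (hb₁ : Summable fun n => ‖b₁ n‖)
    (hc₁ : Summable fun n => ‖c₁ n‖)
    (ha₂ : Summable fun n => ‖a₂ n‖) (hb₂ : Summable fun n => ‖b₂ n‖)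
    (hc₂ : Summable fun n => ‖c₂ n‖)
    (ε : ℝ) (hε : ε ∈ Set.Ioo (0:ℝ) (1 / (‖L‖ + 1)))
    (γ : ℕ → ℝ) (hγ : ∀ n, γ n ∈ Set.Icc ε ((1 - ε) / ‖L‖))
    (JA : ℕ → H → H) (hJA : ∀ n, IsResolvent (γ n) A (JA n))
    (JB : ℕ → G → G) (hJB : ∀ n, IsResolvent (γ n) (fun w => {g : G | w ∈ B g}) (JB n))
    (x y₁ p₁ q₁ : ℕ → H) (v y₂ p₂ q₂ : ℕ → G)
    (hy₁ : ∀ n, y₁ n = x n - γ n • (ContinuousLinearMap.adjoint L (v n) + a₁ n))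
    (hy₂ : ∀ n, y₂ n = v n + γ n • (L (x n) + a₂ n))
    (hp₁ : ∀ n, p₁ n = JA n (y₁ n + γ n • z) + b₁ n)
    (hp₂ : ∀ n, p₂ n = JB n (y₂ n - γ n • r) + b₂ n)
    (hq₁ : ∀ n, q₁ n = p₁ n - γ n • (ContinuousLinearMap.adjoint L (p₂ n) + c₁ n))
    (hq₂ : ∀ n, q₂ n = p₂ n + γ n • (L (p₁ n) + c₂ n))
    (hx : ∀ n, x (n + 1) = x n - y₁ n + q₁ n)
    (hv : ∀ n, v (n + 1) = v n - y₂ n + q₂ n)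
    (xb : H) (vb : G)
    (hxweak : WeakTendsto x xb) (hvweak : WeakTendsto v vb)
    (hprimal : ∃ u ∈ A xb, ∃ w ∈ B (L xb - r), z = u + ContinuousLinearMap.adjoint L w)
    (hdual : ∃ s : H, z - ContinuousLinearMap.adjoint L vb ∈ A s ∧
      ∃ g : G, vb ∈ B g ∧ -r = -(L s) + g)
    (hkt₁ : z - ContinuousLinearMap.adjoint L vb ∈ A xb)
    (hkt₂ : vb ∈ B (L xb - r))
    (hunif : UnifMonoAt A xb) :
    Filter.Tendsto x Filter.atTop (nhds xb) ∧
      Filter.Tendsto p₁ Filter.atTop (nhds xb) := by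
  classical
  obtain ⟨hε0, hε1⟩ := hε
  have hL0 : (0:ℝ) < ‖L‖ := norm_pos_iff.mpr hL
  have hε1' : ε < 1 := lt_of_lt_of_le hε1 ((div_le_one (by positivity)).mpr (by linarith))
  set Γ : ℝ := (1 - ε) / ‖L‖ with hΓdef
  have hΓ0 : 0 ≤ Γ := by rw [hΓdef]; exact div_nonneg (by linarith) hL0.le
  have hγε : ∀ n, ε ≤ γ n := fun n => (hγ n).1
  have hγΓ : ∀ n, γ n ≤ Γ := fun n => (hγ n).2
  have hγ0 : ∀ n, 0 ≤ γ n := fun n => le_trans hε0.le (hγε n)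
  have hγL : ∀ n, γ n * ‖L‖ ≤ 1 - ε := fun n => (le_div_iff₀ hL0).mp (hγΓ n)
  obtain ⟨φ, hφmono, hφ0, hφpos, hφkey⟩ := hunif
  have hφnn : ∀ t : ℝ, 0 ≤ t → 0 ≤ φ t := fun t ht => hφ0 ▸ hφmono 0 t le_rfl ht
  -- extract resolvent data
  have hres1 : ∀ n, ∃ u, u ∈ A (p₁ n - b₁ n) ∧ y₁ n + γ n • z = (p₁ n - b₁ n) + γ n • u := by
    intro n
    obtain ⟨u, hu, he⟩ := hJA n (y₁ n + γ n • z)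
    have hp : p₁ n - b₁ n = JA n (y₁ n + γ n • z) := by rw [hp₁ n]; abel
    exact ⟨u, by rw [hp]; exact hu, by rw [hp]; exact he⟩
  choose ut hut1 hut2 using hres1
  have hres2 : ∀ n, ∃ g, (p₂ n - b₂ n) ∈ B g ∧ y₂ n - γ n • r = (p₂ n - b₂ n) + γ n • g := by
    intro n
    obtain ⟨u, hu, he⟩ := hJB n (y₂ n - γ n • r)
    have hp : p₂ n - b₂ n = JB n (y₂ n - γ n • r) := by rw [hp₂ n]; abel
    exact ⟨u, by rw [hp]; exact hu, by rw [hp]; exact he⟩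
  choose gt hgt1 hgt2 using hres2
  -- product-space objects (opaque, with defining equations)
  obtain ⟨W, hWdef⟩ : ∃ W : ℕ → WithLp 2 (H × G), ∀ n, W n = mk (x n) (v n) := ⟨_, fun _ => rfl⟩
  obtain ⟨P, hPdef⟩ : ∃ P : ℕ → WithLp 2 (H × G), ∀ n, P n = mk (p₁ n - b₁ n) (p₂ n - b₂ n) :=
    ⟨_, fun _ => rfl⟩
  obtain ⟨wb, hwbdef⟩ : ∃ wb : WithLp 2 (H × G), wb = mk xb vb := ⟨_, rfl⟩
  obtain ⟨U, hUdef⟩ : ∃ U : ℕ → WithLp 2 (H × G), ∀ n, U n = mk (ut n - z) (gt n + r) :=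
    ⟨_, fun _ => rfl⟩
  obtain ⟨ub, hubdef⟩ :
      ∃ ub : WithLp 2 (H × G), ub = mk (-(ContinuousLinearMap.adjoint L vb)) (L xb) := ⟨_, rfl⟩
  obtain ⟨aa, haadef⟩ : ∃ aa : ℕ → WithLp 2 (H × G), ∀ n, aa n = mk (a₁ n) (-(a₂ n)) :=
    ⟨_, fun _ => rfl⟩
  obtain ⟨bbs, hbbdef⟩ : ∃ bbs : ℕ → WithLp 2 (H × G), ∀ n, bbs n = mk (b₁ n) (b₂ n) :=
    ⟨_, fun _ => rfl⟩
  obtain ⟨ccs, hccdef⟩ : ∃ ccs : ℕ → WithLp 2 (H × G), ∀ n, ccs n = mk (c₁ n) (-(c₂ n)) :=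
    ⟨_, fun _ => rfl⟩
  obtain ⟨Er, hErdef⟩ : ∃ Er : ℕ → WithLp 2 (H × G),
      ∀ n, Er n = γ n • aa n + (bbs n - γ n • Sk L (bbs n) - γ n • ccs n) := ⟨_, fun _ => rfl⟩
  -- basic identities
  have hyW : ∀ n, mk (y₁ n) (y₂ n) = W n - γ n • Sk L (W n) - γ n • aa n := by
    intro n
    rw [hWdef, haadef, Sk_mk, mk_smul, mk_smul, mk_sub, mk_sub]
    refine mk_eq ?_ ?_
    · rw [hy₁ n, smul_add]; abel
    · rw [hy₂ n, smul_add, smul_neg, smul_neg]; abel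
  have hyP : ∀ n, mk (y₁ n) (y₂ n) = P n + γ n • U n := by
    intro n
    rw [hPdef, hUdef, mk_smul, mk_add]
    refine mk_eq ?_ ?_
    · have h := hut2 n
      rw [smul_sub]
      have h2 : y₁ n = (p₁ n - b₁ n) + γ n • ut n - γ n • z := by rw [← h]; abel
      rw [h2]; abel
    · have h := hgt2 n
      rw [smul_add]
      have h2 : y₂ n = (p₂ n - b₂ n) + γ n • gt n + γ n • r := by rw [← h]; abel
      rw [h2]; abel
  have hPW : ∀ n, P n - W n = (-(γ n)) • (U n + Sk L (W n) + aa n) := by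
    intro n
    have h1 := hyW n
    have h2 := hyP n
    have h3 : P n + γ n • U n = W n - γ n • Sk L (W n) - γ n • aa n := by rw [← h2, h1]
    have h4 : P n = (W n - γ n • Sk L (W n) - γ n • aa n) - γ n • U n := eq_sub_of_add_eq h3
    rw [h4]; module
  have hWnext : ∀ n, W (n + 1) = P n + γ n • Sk L (W n - P n) + Er n := by
    intro n
    rw [hErdef n, hWdef, hWdef, hPdef, haadef, hbbdef, hccdef, mk_sub, Sk_mk, Sk_mk,
      mk_smul, mk_smul, mk_smul, mk_smul, mk_sub, mk_sub, mk_add, mk_add, mk_add]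
    refine mk_eq ?_ ?_
    · rw [hx n, hy₁ n, hq₁ n]
      simp only [map_sub, smul_add, smul_sub, smul_neg]
      abel
    · rw [hv n, hy₂ n, hq₂ n]
      simp only [map_sub, smul_add, smul_sub, smul_neg]
      abel
  have hub : ub = -Sk L wb := by
    rw [hubdef, hwbdef, Sk_mk, mk_neg]
    exact mk_eq rfl (neg_neg (L xb)).symm
  have hskew3 : ∀ n, ⟪P n - wb, Sk L (P n) + ub⟫_ℝ = 0 := by
    intro n
    rw [hub, ← sub_eq_add_neg, ← Sk_sub]
    exact inner_Sk_self L _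
  obtain ⟨Dl, hDldef⟩ : ∃ Dl : ℕ → ℝ, ∀ n, Dl n = ⟪P n - wb, U n - ub⟫_ℝ := ⟨_, fun _ => rfl⟩
  have hDl : ∀ n, φ ‖xb - (p₁ n - b₁ n)‖ ≤ Dl n := by
    intro n
    have e : P n - wb = mk ((p₁ n - b₁ n) - xb) ((p₂ n - b₂ n) - vb) := by
      rw [hPdef, hwbdef, mk_sub]
    have e2 : U n - ub
        = mk ((ut n - z) - (-(ContinuousLinearMap.adjoint L vb))) ((gt n + r) - L xb) := by
      rw [hUdef, hubdef, mk_sub]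
    rw [hDldef, e, e2, inner_mk]
    have t1 : φ ‖xb - (p₁ n - b₁ n)‖
        ≤ ⟪(p₁ n - b₁ n) - xb, (ut n - z) - (-(ContinuousLinearMap.adjoint L vb))⟫_ℝ := by
      have h := hφkey (z - ContinuousLinearMap.adjoint L vb) hkt₁ (p₁ n - b₁ n) (ut n) (hut1 n)
      have r1 : (p₁ n - b₁ n) - xb = -(xb - (p₁ n - b₁ n)) := by abel
      have r2 : (ut n - z) - (-(ContinuousLinearMap.adjoint L vb))
          = -((z - ContinuousLinearMap.adjoint L vb) - ut n) := by abel
      rw [r1, r2, inner_neg_neg]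
      exact h
    have t2 : 0 ≤ ⟪(p₂ n - b₂ n) - vb, (gt n + r) - L xb⟫_ℝ := by
      have h := hB.1 (gt n) (L xb - r) (p₂ n - b₂ n) vb (hgt1 n) hkt₂
      have e3 : (gt n + r) - L xb = gt n - (L xb - r) := by abel
      rw [e3, real_inner_comm]
      exact h
    linarith
  have hDl0 : ∀ n, 0 ≤ Dl n := fun n => le_trans (hφnn _ (norm_nonneg _)) (hDl n)
  -- bound on ‖P n - wb‖
  have hPw : ∀ n, ‖P n - wb‖ ≤ 2 * ‖W n - wb‖ + γ n * ‖aa n‖ := by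
    intro n
    have t4 : γ n * ‖L‖ ≤ 1 := le_trans (hγL n) (by linarith)
    have e : P n - wb = (mk (y₁ n) (y₂ n) - (wb + γ n • ub)) - γ n • (U n - ub) := by
      rw [hyP n]; module
    have t3 : ‖γ n • aa n‖ = γ n * ‖aa n‖ := by
      rw [norm_smul, Real.norm_eq_abs, abs_of_nonneg (hγ0 n)]
    have hyd : ‖mk (y₁ n) (y₂ n) - (wb + γ n • ub)‖ ≤ 2 * ‖W n - wb‖ + γ n * ‖aa n‖ := by
      have e2 : mk (y₁ n) (y₂ n) - (wb + γ n • ub)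
          = (W n - wb) - γ n • Sk L (W n - wb) - γ n • aa n := by
        rw [hyW n, hub, Sk_sub]; module
      have hsm : ‖γ n • Sk L (W n - wb)‖ ≤ 1 * ‖W n - wb‖ := by
        rw [norm_smul, Real.norm_eq_abs, abs_of_nonneg (hγ0 n)]
        calc γ n * ‖Sk L (W n - wb)‖ ≤ γ n * (‖L‖ * ‖W n - wb‖) :=
              mul_le_mul_of_nonneg_left (norm_Sk_le _ _) (hγ0 n)
          _ = (γ n * ‖L‖) * ‖W n - wb‖ := by ring
          _ ≤ 1 * ‖W n - wb‖ := mul_le_mul_of_nonneg_right t4 (norm_nonneg _)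
      rw [e2]
      calc ‖(W n - wb) - γ n • Sk L (W n - wb) - γ n • aa n‖
          ≤ ‖(W n - wb) - γ n • Sk L (W n - wb)‖ + ‖γ n • aa n‖ := norm_sub_le _ _
        _ ≤ (‖W n - wb‖ + 1 * ‖W n - wb‖) + γ n * ‖aa n‖ := by
            have h5 := norm_sub_le (W n - wb) (γ n • Sk L (W n - wb))
            rw [t3]; linarith
        _ = 2 * ‖W n - wb‖ + γ n * ‖aa n‖ := by ring
    have key : ‖P n - wb‖ ^ 2 ≤ ‖P n - wb‖ * (2 * ‖W n - wb‖ + γ n * ‖aa n‖) := by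
      have i1 : ⟪P n - wb, P n - wb⟫_ℝ
          = ⟪P n - wb, mk (y₁ n) (y₂ n) - (wb + γ n • ub)⟫_ℝ - γ n * Dl n := by
        rw [hDldef, ← real_inner_smul_right, ← inner_sub_right, ← e]
      have cs : ⟪P n - wb, mk (y₁ n) (y₂ n) - (wb + γ n • ub)⟫_ℝ
          ≤ ‖P n - wb‖ * ‖mk (y₁ n) (y₂ n) - (wb + γ n • ub)‖ := real_inner_le_norm _ _
      have hsq : ‖P n - wb‖ ^ 2 = ⟪P n - wb, P n - wb⟫_ℝ := (real_inner_self_eq_norm_sq _).symm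
      have hDln : 0 ≤ γ n * Dl n := mul_nonneg (hγ0 n) (hDl0 n)
      have hmul : ‖P n - wb‖ * ‖mk (y₁ n) (y₂ n) - (wb + γ n • ub)‖
          ≤ ‖P n - wb‖ * (2 * ‖W n - wb‖ + γ n * ‖aa n‖) :=
        mul_le_mul_of_nonneg_left hyd (norm_nonneg _)
      linarith [hsq, i1, cs, hmul]
    rcases eq_or_lt_of_le (norm_nonneg (P n - wb)) with h0 | h0
    · rw [← h0]
      have := mul_nonneg (hγ0 n) (norm_nonneg (aa n))
      linarith [norm_nonneg (W n - wb)]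
    · rw [sq] at key
      exact le_of_mul_le_mul_left key h0
  -- summabilities
  have hsaa : Summable fun n => ‖aa n‖ := by
    refine Summable.of_nonneg_of_le (fun n => norm_nonneg _) (fun n => ?_) (ha₁.add ha₂)
    rw [haadef n]
    simpa [norm_neg] using norm_mk_le (a₁ n) (-(a₂ n))
  have hsbb : Summable fun n => ‖bbs n‖ := by
    refine Summable.of_nonneg_of_le (fun n => norm_nonneg _) (fun n => ?_) (hb₁.add hb₂)
    rw [hbbdef n]
    exact norm_mk_le (b₁ n) (b₂ n)
  have hscc : Summable fun n => ‖ccs n‖ := by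
    refine Summable.of_nonneg_of_le (fun n => norm_nonneg _) (fun n => ?_) (hc₁.add hc₂)
    rw [hccdef n]
    simpa [norm_neg] using norm_mk_le (c₁ n) (-(c₂ n))
  have hErle : ∀ n, ‖Er n‖ ≤ Γ * ‖aa n‖ + 2 * ‖bbs n‖ + Γ * ‖ccs n‖ := by
    intro n
    rw [hErdef n]
    have t1 : ‖γ n • aa n + (bbs n - γ n • Sk L (bbs n) - γ n • ccs n)‖
        ≤ ‖γ n • aa n‖ + (‖bbs n‖ + ‖γ n • Sk L (bbs n)‖ + ‖γ n • ccs n‖) := by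
      refine le_trans (norm_add_le _ _) ?_
      gcongr
      refine le_trans (norm_sub_le _ _) ?_
      gcongr
      exact norm_sub_le _ _
    have e1 : ‖γ n • aa n‖ = γ n * ‖aa n‖ := by
      rw [norm_smul, Real.norm_eq_abs, abs_of_nonneg (hγ0 n)]
    have e2 : ‖γ n • Sk L (bbs n)‖ ≤ γ n * (‖L‖ * ‖bbs n‖) := by
      rw [norm_smul, Real.norm_eq_abs, abs_of_nonneg (hγ0 n)]
      exact mul_le_mul_of_nonneg_left (norm_Sk_le L _) (hγ0 n)
    have e3 : ‖γ n • ccs n‖ = γ n * ‖ccs n‖ := by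
      rw [norm_smul, Real.norm_eq_abs, abs_of_nonneg (hγ0 n)]
    have t4 : γ n * ‖L‖ ≤ 1 := le_trans (hγL n) (by linarith)
    nlinarith [norm_nonneg (aa n), norm_nonneg (bbs n), norm_nonneg (ccs n), hγ0 n, hγΓ n,
      hγL n, norm_nonneg (Sk L (bbs n))]
  have hsEr : Summable fun n => ‖Er n‖ := by
    refine Summable.of_nonneg_of_le (fun n => norm_nonneg _) hErle ?_
    exact ((hsaa.mul_left Γ).add (hsbb.mul_left 2)).add (hscc.mul_left Γ)
  -- step constant
  obtain ⟨τ, hτdef⟩ : ∃ τ : ℝ, τ = 1 - (1 - ε)^2 := ⟨_, rfl⟩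
  have hτ0 : 0 < τ := by rw [hτdef]; nlinarith
  have hcore : ∀ n, ‖P n + γ n • Sk L (W n - P n) - wb‖ ^ 2
      = ‖W n - wb‖ ^ 2 - ‖P n - W n‖ ^ 2 + (γ n) ^ 2 * ‖Sk L (W n - P n)‖ ^ 2
        - 2 * γ n * Dl n - 2 * γ n * ⟪P n - wb, aa n⟫_ℝ := by
    intro n
    rw [hDldef]
    exact tseng_core (γ n) (W n) wb (P n) (U n) (aa n) (Sk L (W n)) (Sk L (P n))
      (Sk L (W n - P n)) ub (hPW n) (Sk_sub L (W n) (P n)) (hskew3 n)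
  have hWPsq : ∀ n, ‖P n + γ n • Sk L (W n - P n) - wb‖ ^ 2
      ≤ ‖W n - wb‖ ^ 2 - τ * ‖P n - W n‖ ^ 2 - 2 * ε * Dl n
        + 2 * γ n * ‖aa n‖ * (2 * ‖W n - wb‖ + γ n * ‖aa n‖) := by
    intro n
    have h1 := hcore n
    have hSv : ‖Sk L (W n - P n)‖ ≤ ‖L‖ * ‖P n - W n‖ := by
      calc ‖Sk L (W n - P n)‖ ≤ ‖L‖ * ‖W n - P n‖ := norm_Sk_le _ _
        _ = ‖L‖ * ‖P n - W n‖ := by rw [norm_sub_rev]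
    have hSv2 : (γ n)^2 * ‖Sk L (W n - P n)‖^2 ≤ (1-ε)^2 * ‖P n - W n‖^2 := by
      have h2 : γ n * ‖Sk L (W n - P n)‖ ≤ (1-ε) * ‖P n - W n‖ := by
        calc γ n * ‖Sk L (W n - P n)‖ ≤ γ n * (‖L‖ * ‖P n - W n‖) :=
              mul_le_mul_of_nonneg_left hSv (hγ0 n)
          _ = (γ n * ‖L‖) * ‖P n - W n‖ := by ring
          _ ≤ (1-ε) * ‖P n - W n‖ := mul_le_mul_of_nonneg_right (hγL n) (norm_nonneg _)
      have h3 : 0 ≤ γ n * ‖Sk L (W n - P n)‖ := mul_nonneg (hγ0 n) (norm_nonneg _)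
      nlinarith
    have hγDl : 2 * ε * Dl n ≤ 2 * γ n * Dl n := by nlinarith [hγε n, hDl0 n]
    have hinner : -(2 * γ n * ⟪P n - wb, aa n⟫_ℝ)
        ≤ 2 * γ n * ‖aa n‖ * (2 * ‖W n - wb‖ + γ n * ‖aa n‖) := by
      have c1 : -⟪P n - wb, aa n⟫_ℝ ≤ ‖P n - wb‖ * ‖aa n‖ := by
        have h4 := abs_real_inner_le_norm (P n - wb) (aa n)
        linarith [neg_abs_le (⟪P n - wb, aa n⟫_ℝ)]
      have c2 : ‖P n - wb‖ * ‖aa n‖ ≤ (2 * ‖W n - wb‖ + γ n * ‖aa n‖) * ‖aa n‖ :=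
        mul_le_mul_of_nonneg_right (hPw n) (norm_nonneg _)
      nlinarith [hγ0 n, norm_nonneg (aa n), mul_nonneg (hγ0 n) (norm_nonneg (aa n))]
    rw [hτdef]
    nlinarith [h1, hSv2, hγDl, hinner]
  have hWPn : ∀ n, ‖P n + γ n • Sk L (W n - P n) - wb‖ ≤ ‖W n - wb‖ + 2 * γ n * ‖aa n‖ := by
    intro n
    have h1 := hWPsq n
    have h2 : ‖P n + γ n • Sk L (W n - P n) - wb‖^2 ≤ (‖W n - wb‖ + 2 * γ n * ‖aa n‖)^2 := by
      nlinarith [mul_nonneg hτ0.le (sq_nonneg ‖P n - W n‖), mul_nonneg hε0.le (hDl0 n),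
        sq_nonneg (γ n * ‖aa n‖)]
    have h3 : 0 ≤ ‖W n - wb‖ + 2 * γ n * ‖aa n‖ := by
      have := mul_nonneg (hγ0 n) (norm_nonneg (aa n))
      linarith [norm_nonneg (W n - wb)]
    exact le_of_pow_le_pow_left₀ two_ne_zero h3 h2
  have tri : ∀ n, ‖W (n+1) - wb‖ ≤ ‖P n + γ n • Sk L (W n - P n) - wb‖ + ‖Er n‖ := by
    intro n
    have e : W (n+1) - wb = (P n + γ n • Sk L (W n - P n) - wb) + Er n := by
      rw [hWnext n]; abel
    rw [e]; exact norm_add_le _ _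
  obtain ⟨η, hηdef⟩ : ∃ η : ℕ → ℝ, ∀ n, η n = 2 * Γ * ‖aa n‖ + ‖Er n‖ := ⟨_, fun _ => rfl⟩
  have hηnn : ∀ n, 0 ≤ η n := by
    intro n; rw [hηdef]
    have h1 : 0 ≤ 2 * Γ * ‖aa n‖ := mul_nonneg (by linarith) (norm_nonneg _)
    linarith [norm_nonneg (Er n)]
  have hsη : Summable η :=
    ((hsaa.mul_left (2 * Γ)).add hsEr).congr (fun n => (hηdef n).symm)
  have fejer : ∀ n, ‖W (n+1) - wb‖ ≤ ‖W n - wb‖ + η n := by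
    intro n
    have h2 := hWPn n
    have h3 : 2 * γ n * ‖aa n‖ ≤ 2 * Γ * ‖aa n‖ := by
      nlinarith [hγΓ n, norm_nonneg (aa n)]
    rw [hηdef]; linarith [tri n]
  have hDbd : ∀ n, ‖W n - wb‖ ≤ ‖W 0 - wb‖ + ∑' k, η k := by
    have part : ∀ n, ‖W n - wb‖ ≤ ‖W 0 - wb‖ + ∑ k ∈ Finset.range n, η k := by
      intro n
      induction n with
      | zero => simp
      | succ m ih =>
        calc ‖W (m+1) - wb‖ ≤ ‖W m - wb‖ + η m := fejer m
          _ ≤ (‖W 0 - wb‖ + ∑ k ∈ Finset.range m, η k) + η m := by linarith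
          _ = ‖W 0 - wb‖ + ∑ k ∈ Finset.range (m+1), η k := by
              rw [Finset.sum_range_succ]; ring
    intro n
    exact (part n).trans
      (add_le_add_right (Summable.sum_le_tsum (Finset.range n) (fun i _ => hηnn i) hsη) _)
  obtain ⟨D, hDdef⟩ : ∃ D : ℝ, D = ‖W 0 - wb‖ + ∑' k, η k := ⟨_, rfl⟩
  have hD0 : 0 ≤ D := by
    rw [hDdef]
    have : (0:ℝ) ≤ ∑' k, η k := tsum_nonneg hηnn
    linarith [norm_nonneg (W 0 - wb)]
  have hDb : ∀ n, ‖W n - wb‖ ≤ D := fun n => hDdef ▸ hDbd n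
  obtain ⟨Ca, hCadef⟩ : ∃ Ca : ℝ, Ca = ∑' n, ‖aa n‖ := ⟨_, rfl⟩
  have hCa : ∀ n, ‖aa n‖ ≤ Ca := fun n => hCadef ▸ Summable.le_tsum hsaa n (fun j _ => norm_nonneg _)
  have hCa0 : 0 ≤ Ca := hCadef ▸ tsum_nonneg (fun n => norm_nonneg _)
  obtain ⟨Ce, hCedef⟩ : ∃ Ce : ℝ, Ce = ∑' n, ‖Er n‖ := ⟨_, rfl⟩
  have hCe : ∀ n, ‖Er n‖ ≤ Ce := fun n => hCedef ▸ Summable.le_tsum hsEr n (fun j _ => norm_nonneg _)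
  have hCe0 : 0 ≤ Ce := hCedef ▸ tsum_nonneg (fun n => norm_nonneg _)
  obtain ⟨β, hβdef⟩ : ∃ β : ℕ → ℝ, ∀ n, β n
      = (2*Γ*(2*D + Γ*Ca)) * ‖aa n‖ + (2*(D + 2*Γ*Ca) + Ce) * ‖Er n‖ := ⟨_, fun _ => rfl⟩
  have hβnn : ∀ n, 0 ≤ β n := by
    intro n; rw [hβdef]
    have h1 : 0 ≤ (2*Γ*(2*D + Γ*Ca)) * ‖aa n‖ :=
      mul_nonneg (mul_nonneg (by linarith) (by nlinarith)) (norm_nonneg _)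
    have h2 : 0 ≤ (2*(D + 2*Γ*Ca) + Ce) * ‖Er n‖ :=
      mul_nonneg (by nlinarith) (norm_nonneg _)
    linarith
  have hsβ : Summable β :=
    ((hsaa.mul_left _).add (hsEr.mul_left _)).congr (fun n => (hβdef n).symm)
  have step2 : ∀ n, ‖W (n+1) - wb‖^2 + τ*‖P n - W n‖^2 + 2*ε*Dl n ≤ ‖W n - wb‖^2 + β n := by
    intro n
    have q1 := hWPn n
    have q2 := hWPsq n
    have hq0 : 0 ≤ ‖P n + γ n • Sk L (W n - P n) - wb‖ := norm_nonneg _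
    have sq1 : ‖W (n+1) - wb‖^2 ≤ (‖P n + γ n • Sk L (W n - P n) - wb‖ + ‖Er n‖)^2 :=
      pow_le_pow_left₀ (norm_nonneg _) (tri n) 2
    have bQ : ‖P n + γ n • Sk L (W n - P n) - wb‖ ≤ D + 2*Γ*Ca := by
      refine q1.trans ?_
      have h3 : 2*γ n*‖aa n‖ ≤ 2*Γ*Ca := by
        nlinarith [hγΓ n, hγ0 n, hCa n, norm_nonneg (aa n), hΓ0, hCa0]
      linarith [hDb n]
    have baa : 2*γ n*‖aa n‖*(2*‖W n - wb‖ + γ n*‖aa n‖) ≤ (2*Γ*(2*D + Γ*Ca)) * ‖aa n‖ := by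
      have g1 : 0 ≤ ‖aa n‖ := norm_nonneg _
      have g2 : γ n * ‖aa n‖ ≤ Γ * Ca := by nlinarith [hγΓ n, hγ0 n, hCa n, hΓ0]
      have g3 : 2*‖W n - wb‖ + γ n*‖aa n‖ ≤ 2*D + Γ*Ca := by linarith [hDb n]
      have g5 : 2*γ n*‖aa n‖ ≤ 2*Γ*‖aa n‖ := by nlinarith [hγΓ n, g1]
      have g6 : 0 ≤ 2*γ n*‖aa n‖ := by nlinarith [mul_nonneg (hγ0 n) g1]
      calc 2*γ n*‖aa n‖*(2*‖W n - wb‖ + γ n*‖aa n‖)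
          ≤ 2*γ n*‖aa n‖*(2*D + Γ*Ca) := mul_le_mul_of_nonneg_left g3 g6
        _ ≤ 2*Γ*‖aa n‖*(2*D + Γ*Ca) :=
            mul_le_mul_of_nonneg_right g5 (by nlinarith [hD0, hΓ0, hCa0])
        _ = (2*Γ*(2*D + Γ*Ca)) * ‖aa n‖ := by ring
    have cross : 2*‖Er n‖*‖P n + γ n • Sk L (W n - P n) - wb‖ + ‖Er n‖^2
        ≤ (2*(D + 2*Γ*Ca) + Ce)*‖Er n‖ := by
      have g1 : 0 ≤ ‖Er n‖ := norm_nonneg _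
      have g2 : ‖Er n‖^2 ≤ Ce * ‖Er n‖ := by nlinarith [hCe n]
      have g3 : 2*‖Er n‖*‖P n + γ n • Sk L (W n - P n) - wb‖ ≤ 2*‖Er n‖*(D + 2*Γ*Ca) := by
        nlinarith [bQ, g1, hq0]
      nlinarith
    rw [hβdef]
    nlinarith [sq1, q2, baa, cross, hq0, norm_nonneg (Er n)]
  have teles : ∀ N, ∑ n ∈ Finset.range N, (τ*‖P n - W n‖^2 + 2*ε*Dl n) + ‖W N - wb‖^2
      ≤ ‖W 0 - wb‖^2 + ∑ n ∈ Finset.range N, β n := by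
    intro N
    induction N with
    | zero => simp
    | succ m ih =>
      rw [Finset.sum_range_succ, Finset.sum_range_succ]
      have := step2 m
      linarith
  have hgnn : ∀ n, 0 ≤ τ*‖P n - W n‖^2 + 2*ε*Dl n := by
    intro n
    have g1 := mul_nonneg hτ0.le (sq_nonneg ‖P n - W n‖)
    have g2 := mul_nonneg (by linarith : (0:ℝ) ≤ 2*ε) (hDl0 n)
    linarith
  have hsum : ∀ N, ∑ n ∈ Finset.range N, (τ*‖P n - W n‖^2 + 2*ε*Dl n)
      ≤ ‖W 0 - wb‖^2 + ∑' n, β n := by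
    intro N
    have h1 := teles N
    have h2 : ∑ n ∈ Finset.range N, β n ≤ ∑' n, β n :=
      Summable.sum_le_tsum _ (fun i _ => hβnn i) hsβ
    nlinarith [sq_nonneg ‖W N - wb‖]
  have hgs : Summable (fun n => τ*‖P n - W n‖^2 + 2*ε*Dl n) :=
    summable_of_sum_range_le hgnn hsum
  have hg0 : Tendsto (fun n => τ*‖P n - W n‖^2 + 2*ε*Dl n) atTop (𝓝 0) :=
    hgs.tendsto_atTop_zero
  have hs2 : Tendsto (fun n => ‖P n - W n‖^2) atTop (𝓝 0) := by
    have hb : ∀ n, ‖P n - W n‖^2 ≤ (τ*‖P n - W n‖^2 + 2*ε*Dl n) / τ := by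
      intro n
      rw [le_div_iff₀ hτ0]
      have := mul_nonneg (by linarith : (0:ℝ) ≤ 2*ε) (hDl0 n)
      nlinarith
    have hlim : Tendsto (fun n => (τ*‖P n - W n‖^2 + 2*ε*Dl n)/τ) atTop (𝓝 0) := by
      have := hg0.div_const τ; simpa using this
    exact squeeze_zero (fun n => sq_nonneg _) hb hlim
  have hDlz : Tendsto Dl atTop (𝓝 0) := by
    have hb : ∀ n, Dl n ≤ (τ*‖P n - W n‖^2 + 2*ε*Dl n) / (2*ε) := by
      intro n
      rw [le_div_iff₀ (by linarith : (0:ℝ) < 2*ε)]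
      nlinarith [mul_nonneg hτ0.le (sq_nonneg ‖P n - W n‖)]
    have hlim : Tendsto (fun n => (τ*‖P n - W n‖^2 + 2*ε*Dl n)/(2*ε)) atTop (𝓝 0) := by
      have := hg0.div_const (2*ε); simpa using this
    exact squeeze_zero hDl0 hb hlim
  have hφz : Tendsto (fun n => φ ‖xb - (p₁ n - b₁ n)‖) atTop (𝓝 0) :=
    squeeze_zero (fun n => hφnn _ (norm_nonneg _)) hDl hDlz
  have htz : Tendsto (fun n => ‖xb - (p₁ n - b₁ n)‖) atTop (𝓝 0) := by
    rw [Metric.tendsto_atTop]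
    intro δ hδ
    obtain ⟨N, hN⟩ := (Metric.tendsto_atTop.mp hφz) (φ δ) (hφpos δ hδ)
    refine ⟨N, fun n hn => ?_⟩
    have h1 := hN n hn
    rw [Real.dist_eq, sub_zero] at h1 ⊢
    rw [abs_of_nonneg (norm_nonneg _)]
    rw [abs_of_nonneg (hφnn _ (norm_nonneg _))] at h1
    by_contra hcon
    push_neg at hcon
    exact absurd h1 (not_lt.mpr (hφmono δ _ hδ.le hcon))
  have hPt : Tendsto (fun n => p₁ n - b₁ n) atTop (𝓝 xb) := by
    rw [tendsto_iff_norm_sub_tendsto_zero]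
    exact Filter.Tendsto.congr (fun n => norm_sub_rev xb _) htz
  have hb1z : Tendsto b₁ atTop (𝓝 0) := by
    rw [tendsto_zero_iff_norm_tendsto_zero]
    exact hb₁.tendsto_atTop_zero
  have hp1c : Tendsto p₁ atTop (𝓝 xb) := by
    have h := hPt.add hb1z
    simp only [sub_add_cancel, add_zero] at h
    exact h
  have hsPW : Tendsto (fun n => ‖P n - W n‖) atTop (𝓝 0) := by
    have h2 := (Real.continuous_sqrt.tendsto 0).comp hs2
    have h3 : Tendsto (fun n => Real.sqrt (‖P n - W n‖^2)) atTop (𝓝 (Real.sqrt 0)) := h2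
    rw [Real.sqrt_zero] at h3
    exact h3.congr (fun n => Real.sqrt_sq (norm_nonneg _))
  have hxc : Tendsto x atTop (𝓝 xb) := by
    rw [tendsto_iff_norm_sub_tendsto_zero]
    have hb : ∀ n, ‖x n - xb‖ ≤ ‖P n - W n‖ + ‖xb - (p₁ n - b₁ n)‖ := by
      intro n
      have c1 : ‖x n - (p₁ n - b₁ n)‖ ≤ ‖P n - W n‖ := by
        have e : W n - P n = mk (x n - (p₁ n - b₁ n)) (v n - (p₂ n - b₂ n)) := by
          rw [hWdef, hPdef, mk_sub]
        calc ‖x n - (p₁ n - b₁ n)‖ ≤ ‖W n - P n‖ := by rw [e]; exact fst_norm_le _ _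
          _ = ‖P n - W n‖ := norm_sub_rev _ _
      calc ‖x n - xb‖ = ‖(x n - (p₁ n - b₁ n)) + ((p₁ n - b₁ n) - xb)‖ := by
            congr 1; abel
        _ ≤ ‖x n - (p₁ n - b₁ n)‖ + ‖(p₁ n - b₁ n) - xb‖ := norm_add_le _ _
        _ ≤ ‖P n - W n‖ + ‖xb - (p₁ n - b₁ n)‖ := by
            rw [norm_sub_rev (p₁ n - b₁ n) xb]; linarith
    exact squeeze_zero (fun n => norm_nonneg _) hb (by simpa using hsPW.add htz)
  exact ⟨hxc, hp1c⟩
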